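/- arXiv:1310.7770 — 2 statements merged into one kernel-verified Lean document; each statement's English description precedes it below -/
import Mathlib

section
/- If $\mu\in\mathcal{M}_1^{s}(\mathcal{T}^2)$ is a probability measure with equal marginals that is not of the form $\mu_\gamma$ for a simple cycle $\gamma$, then $\mu$ is not an extreme point of $\mathcal{M}_1^{s}(\mathcal{T}^2)$: there exist distinct $\mu_1,\mu_2\in\mathcal{M}_1^{s}(\mathcal{T}^2)$ and $a\in(0,1)$ with $\mu=a\mu_1+(1-a)\mu_2$. -/
/-- Probability measure on `T²` with equal marginals. -/
def memM1s {T : Type*} [Fintype T] (μ : T × T → ℝ) : Prop :=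
  (∀ p, 0 ≤ μ p) ∧ (∑ p : T × T, μ p = 1) ∧
    ∀ i : T, ∑ j, μ (i, j) = ∑ j, μ (j, i)

/-- The uniform measure on the edges of a cycle `γ` of length `l + 1`,
given by the vertices `γ 0, γ 1, …, γ l` (addition in `Fin (l+1)` is cyclic). -/
noncomputable def cycleMeasure {T : Type*} [Fintype T] [DecidableEq T] {l : ℕ}
    (γ : Fin (l + 1) → T) : T × T → ℝ :=
  fun p => if ∃ m, p = (γ m, γ (m + 1)) then ((l : ℝ) + 1)⁻¹ else 0


lemma exists_cycle' {T : Type*} [Fintype T] [DecidableEq T]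
    (μ : T × T → ℝ) (h : memM1s μ) :
    ∃ (l : ℕ) (γ : Fin (l + 1) → T), Function.Injective γ ∧
      ∀ m : Fin (l + 1), 0 < μ (γ m, γ (m + 1)) := by
  classical
  obtain ⟨hpos, hsum, hmarg⟩ := h
  have hex : ∃ p : T × T, 0 < μ p := by
    by_contra hc
    push_neg at hc
    have h0 : ∑ p : T × T, μ p = 0 :=
      Finset.sum_eq_zero fun p _ => le_antisymm (hc p) (hpos p)
    rw [h0] at hsum; norm_num at hsum
  have step : ∀ p : T × T, 0 < μ p → ∃ k, 0 < μ (p.2, k) := by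
    rintro ⟨i, j⟩ hij
    by_contra hc
    push_neg at hc
    have h1 : ∑ k, μ (j, k) = 0 :=
      le_antisymm (Finset.sum_nonpos fun k _ => hc k) (Finset.sum_nonneg fun k _ => hpos _)
    have h2 : 0 < ∑ k, μ (k, j) :=
      lt_of_lt_of_le hij (Finset.single_le_sum (f := fun k => μ (k, j)) (fun k _ => hpos _) (Finset.mem_univ i))
    rw [hmarg j] at h1
    linarith
  -- walk
  let S := {p : T × T // 0 < μ p}
  let next : S → S := fun p => ⟨(p.1.2, (step p.1 p.2).choose), by
    have := (step p.1 p.2).choose_spec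
    exact this⟩
  let e : ℕ → S := fun n => next^[n] ⟨hex.choose, hex.choose_spec⟩
  let v : ℕ → T := fun n => ((e n).1).1
  have hestep : ∀ n, e (n + 1) = next (e n) := fun n =>
    Function.iterate_succ_apply' next n _
  have hv : ∀ n, 0 < μ (v n, v (n + 1)) := by
    intro n
    have h1 : v (n + 1) = (e n).1.2 := by
      show ((e (n+1)).1).1 = (e n).1.2
      rw [hestep n]
    rw [h1]
    have h2 := (e n).2
    simpa using h2
  have hrep : ∃ n, ∃ m, m < n ∧ v m = v n := by
    obtain ⟨m, n, hmn, hvmn⟩ := Finite.exists_ne_map_eq_of_infinite v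
    rcases lt_or_gt_of_ne hmn with h' | h'
    · exact ⟨n, m, h', hvmn⟩
    · exact ⟨m, n, h', hvmn.symm⟩
  obtain ⟨m₀, hm₀lt, hveq⟩ := Nat.find_spec hrep
  set n₀ := Nat.find hrep with hn₀
  have hinj : ∀ a b, a < b → b < n₀ → v a ≠ v b := by
    intro a b hab hb habs
    exact Nat.find_min hrep hb ⟨a, hab, habs⟩
  obtain ⟨l, hl⟩ : ∃ l, n₀ - m₀ = l + 1 := ⟨n₀ - m₀ - 1, by omega⟩
  refine ⟨l, fun k => v (m₀ + k), ?_, ?_⟩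
  · intro k₁ k₂ heq
    by_contra hne
    have hne' : (k₁ : ℕ) ≠ (k₂ : ℕ) := fun hh => hne (Fin.ext hh)
    have hk₁ := k₁.isLt
    have hk₂ := k₂.isLt
    rcases hne'.lt_or_gt with h' | h'
    · exact hinj (m₀ + k₁) (m₀ + k₂) (by omega) (by omega) heq
    · exact hinj (m₀ + k₂) (m₀ + k₁) (by omega) (by omega) heq.symm
  · intro m
    have hsucc : v (m₀ + ((m + 1 : Fin (l+1)) : ℕ)) = v (m₀ + (m : ℕ) + 1) := by
      by_cases hm : (m : ℕ) < l
      · have h1 : ((m + 1 : Fin (l+1)) : ℕ) = (m : ℕ) + 1 :=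
          Fin.val_add_one_of_lt (by
            rw [Fin.lt_iff_val_lt_val, Fin.val_last]; exact hm)
        rw [h1, Nat.add_assoc]
      · have hml : (m : ℕ) = l := by have := m.isLt; omega
        have hmlast : m = Fin.last l := Fin.ext (by simp [hml])
        have h1 : (m + 1 : Fin (l+1)) = 0 := by
          rw [hmlast]; exact Fin.last_add_one l
        have h2 : m₀ + (m : ℕ) + 1 = n₀ := by omega
        rw [h1, h2]
        simp only [Fin.val_zero, Nat.add_zero]
        exact hveq
    show 0 < μ (v (m₀ + (m : ℕ)), v (m₀ + ((m + 1 : Fin (l+1)) : ℕ)))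
    rw [hsucc]
    exact hv (m₀ + m)

lemma cycleMeasure_eq' {T : Type*} [Fintype T] [DecidableEq T] {l : ℕ}
    (γ : Fin (l + 1) → T) (hγ : Function.Injective γ) (p : T × T) :
    cycleMeasure γ p
      = ∑ m : Fin (l + 1), if p = (γ m, γ (m + 1)) then ((l : ℝ) + 1)⁻¹ else 0 := by
  classical
  unfold cycleMeasure
  by_cases hp : ∃ m, p = (γ m, γ (m + 1))
  · obtain ⟨m, hm⟩ := hp
    rw [if_pos ⟨m, hm⟩, hm, Finset.sum_eq_single m]
    · simp
    · intro m' _ hne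
      rw [if_neg]
      intro hc
      have h1 : γ m = γ m' := congrArg Prod.fst hc
      exact hne (hγ h1).symm
    · intro hm'; exact absurd (Finset.mem_univ m) hm'
  · rw [if_neg hp]
    exact (Finset.sum_eq_zero fun m _ => if_neg (fun hc => hp ⟨m, hc⟩)).symm

lemma cycleMeasure_memM1s' {T : Type*} [Fintype T] [DecidableEq T] {l : ℕ}
    (γ : Fin (l + 1) → T) (hγ : Function.Injective γ) :
    memM1s (cycleMeasure γ) := by
  classical
  have hval : (0:ℝ) ≤ ((l : ℝ) + 1)⁻¹ := by positivity
  refine ⟨fun p => ?_, ?_, fun i => ?_⟩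
  · unfold cycleMeasure
    split_ifs <;> simp [hval]
  · rw [Finset.sum_congr rfl fun p _ => cycleMeasure_eq' γ hγ p, Finset.sum_comm]
    have : ∀ m : Fin (l+1),
        (∑ p : T × T, if p = (γ m, γ (m+1)) then ((l : ℝ) + 1)⁻¹ else 0)
          = ((l : ℝ) + 1)⁻¹ := by
      intro m
      rw [Finset.sum_ite_eq' Finset.univ (γ m, γ (m+1)) (fun _ => ((l : ℝ) + 1)⁻¹)]
      simp
    rw [Finset.sum_congr rfl fun m _ => this m]
    simp
    field_simp
  · have hrow : ∀ m : Fin (l+1),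
        (∑ j : T, if (i, j) = (γ m, γ (m+1)) then ((l : ℝ) + 1)⁻¹ else 0)
          = if i = γ m then ((l : ℝ) + 1)⁻¹ else 0 := by
      intro m
      simp [Prod.ext_iff, ite_and, Finset.sum_ite_eq']
    have hcol : ∀ m : Fin (l+1),
        (∑ j : T, if (j, i) = (γ m, γ (m+1)) then ((l : ℝ) + 1)⁻¹ else 0)
          = if i = γ (m+1) then ((l : ℝ) + 1)⁻¹ else 0 := by
      intro m
      simp [Prod.ext_iff, ite_and, Finset.sum_ite_eq, eq_comm]
    have hL : ∑ j, cycleMeasure γ (i, j)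
        = ∑ m : Fin (l+1), if i = γ m then ((l : ℝ) + 1)⁻¹ else 0 := by
      rw [Finset.sum_congr rfl fun j _ => cycleMeasure_eq' γ hγ (i, j), Finset.sum_comm]
      exact Finset.sum_congr rfl fun m _ => hrow m
    have hR : ∑ j, cycleMeasure γ (j, i)
        = ∑ m : Fin (l+1), if i = γ (m+1) then ((l : ℝ) + 1)⁻¹ else 0 := by
      rw [Finset.sum_congr rfl fun j _ => cycleMeasure_eq' γ hγ (j, i), Finset.sum_comm]
      exact Finset.sum_congr rfl fun m _ => hcol m
    rw [hL, hR]
    exact (Fintype.sum_equiv (Equiv.addRight (1 : Fin (l+1)))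
      (fun m => if i = γ (m + 1) then ((l : ℝ) + 1)⁻¹ else 0)
      (fun m => if i = γ m then ((l : ℝ) + 1)⁻¹ else 0)
      (fun m => rfl)).symm

/-- A probability measure with equal marginals that is not a cycle measure is not an
extreme point: it is a proper convex combination of two distinct measures with equal
marginals. -/
theorem stmt6 {T : Type*} [Fintype T] [DecidableEq T]
    (μ : T × T → ℝ) (h : memM1s μ)
    (hnot : ¬ ∃ l : ℕ, ∃ γ : Fin (l + 1) → T,
      Function.Injective γ ∧ μ = cycleMeasure γ) :
    ∃ μ₁ μ₂ : T × T → ℝ, memM1s μ₁ ∧ memM1s μ₂ ∧ μ₁ ≠ μ₂ ∧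
      ∃ a ∈ Set.Ioo (0 : ℝ) 1, μ = a • μ₁ + (1 - a) • μ₂ := by
  classical
  obtain ⟨l, γ, hγ, hedge⟩ := exists_cycle' μ h
  obtain ⟨hpos, hsum, hmarg⟩ := h
  obtain ⟨hcpos, hcsum, hcmarg⟩ := cycleMeasure_memM1s' γ hγ
  set c : T × T → ℝ := cycleMeasure γ with hc
  set δ : ℝ := Finset.univ.inf' Finset.univ_nonempty
    (fun m : Fin (l + 1) => μ (γ m, γ (m + 1))) with hδdef
  have hδpos : 0 < δ := by
    rw [hδdef, Finset.lt_inf'_iff]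
    exact fun m _ => hedge m
  have hδle : ∀ m : Fin (l + 1), δ ≤ μ (γ m, γ (m + 1)) :=
    fun m => Finset.inf'_le _ (Finset.mem_univ m)
  set b : ℝ := min (((l : ℝ) + 1) * δ) (1 / 2) with hbdef
  have hb0 : 0 < b := lt_min (by positivity) (by norm_num)
  have hbhalf : b ≤ 1 / 2 := min_le_right _ _
  have hbδ : b ≤ ((l : ℝ) + 1) * δ := min_le_left _ _
  set a : ℝ := 1 - b with hadef
  have ha0 : 0 < a := by simp only [hadef]; linarith
  have ha1 : a < 1 := by simp only [hadef]; linarith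
  have hane : a ≠ 0 := ne_of_gt ha0
  have hkey : ∀ p, 0 ≤ μ p - b * c p := by
    intro p
    rw [hc]
    unfold cycleMeasure
    split_ifs with hp
    · obtain ⟨m, hm⟩ := hp
      have h1 : b * ((l : ℝ) + 1)⁻¹ ≤ δ := by
        have hstep : b * ((l : ℝ) + 1)⁻¹ ≤ (((l : ℝ) + 1) * δ) * ((l : ℝ) + 1)⁻¹ :=
          mul_le_mul_of_nonneg_right hbδ (by positivity)
        have heq : (((l : ℝ) + 1) * δ) * ((l : ℝ) + 1)⁻¹ = δ := by field_simp
        linarith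
      have h2 : δ ≤ μ p := hm ▸ hδle m
      linarith
    · simpa using hpos p
  refine ⟨fun p => a⁻¹ * (μ p - b * c p), c, ⟨?_, ?_, ?_⟩,
    ⟨hcpos, hcsum, hcmarg⟩, ?_, a, ⟨ha0, ha1⟩, ?_⟩
  · intro p
    exact mul_nonneg (by positivity) (hkey p)
  · rw [← Finset.mul_sum, Finset.sum_sub_distrib, ← Finset.mul_sum, hsum, hcsum]
    field_simp
    exact hadef.symm
  · intro i
    rw [← Finset.mul_sum, ← Finset.mul_sum, Finset.sum_sub_distrib,
      Finset.sum_sub_distrib, ← Finset.mul_sum, ← Finset.mul_sum, hmarg i, hcmarg i]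
  · intro heq
    apply hnot
    refine ⟨l, γ, hγ, ?_⟩
    funext p
    have h1 := congrFun heq p
    have h2 : μ p - b * c p = a * c p := by
      field_simp at h1
      linarith [h1]
    have : μ p = c p := by rw [hadef] at h2; linarith
    exact this
  · funext p
    simp only [Pi.add_apply, Pi.smul_apply, smul_eq_mul]
    rw [hadef]
    field_simp
    rw [mul_div_cancel_left₀ _ (by linarith : (1:ℝ) - b ≠ 0)]
    ring
end

section
/- Let $\rho_{ij}=\rho_i\geq 1$ for all $j$ with $(i,j)\in\mathcal{A}$. Then $\chi(\rho) := \min\{\mathcal{I}(\nu)-\mathcal{S}(\nu) : \nu\in\Lambda(\rho)\}$ equals $\min\{\lambda(\rho)\log|\gamma| - \frac{1}{|\gamma|}\sum_{m=1}^{|\gamma|}\rho_{i_m}\log\rho_{i_m} : \gamma=(i_1,\dots,i_{|\gamma|},i_1)\in\Gamma(\rho)\}$, where $\Gamma(\rho)$ is the set of simple cycles $\gamma$ with $\langle\mu_\gamma,\rho\rangle=\lambda(\rho)$. -/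
set_option linter.unusedSectionVars false
set_option linter.unusedVariables false
set_option linter.unusedTactic false
set_option maxHeartbeats 1000000

open Finset Real

section helpers
variable {T : Type*} [Fintype T] [DecidableEq T] [Nonempty T]

lemma cm_nonneg {l : ℕ} (γ : Fin (l + 1) → T) (p : T × T) : 0 ≤ cycleMeasure γ p := by
  unfold cycleMeasure; split <;> positivity

lemma edge_inj {l : ℕ} {γ : Fin (l + 1) → T} (hγ : Function.Injective γ) :
    Function.Injective (fun m : Fin (l+1) => (γ m, γ (m + 1))) := by
  intro a b h
  exact hγ (congrArg Prod.fst h)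

lemma cm_eq_sum {l : ℕ} {γ : Fin (l + 1) → T} (hγ : Function.Injective γ) (p : T × T) :
    cycleMeasure γ p = ∑ m : Fin (l+1), if p = (γ m, γ (m + 1)) then ((l : ℝ) + 1)⁻¹ else 0 := by
  unfold cycleMeasure
  by_cases h : ∃ m, p = (γ m, γ (m + 1))
  · obtain ⟨m, hm⟩ := h
    rw [if_pos ⟨m, hm⟩, Finset.sum_eq_single m]
    · rw [if_pos hm]
    · intro b _ hb
      rw [if_neg]
      intro hpb
      exact hb (edge_inj hγ (hpb.symm.trans hm))
    · intro hm'; exact absurd (Finset.mem_univ m) hm'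
  · rw [if_neg h, Finset.sum_eq_zero]
    intro m _
    rw [if_neg fun hm => h ⟨m, hm⟩]

/-- sum over a set containing the edges of a function vanishing off the edges -/
lemma sum_edges {l : ℕ} {γ : Fin (l + 1) → T} (hγ : Function.Injective γ)
    {s : Finset (T × T)} (hs : ∀ m, (γ m, γ (m + 1)) ∈ s) (g : T × T → ℝ)
    (hg : ∀ p ∈ s, (∀ m, p ≠ (γ m, γ (m + 1))) → g p = 0) :
    ∑ p ∈ s, g p = ∑ m : Fin (l+1), g (γ m, γ (m + 1)) := by
  rw [← Finset.sum_image (f := g) (g := fun m : Fin (l+1) => (γ m, γ (m+1)))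
      (fun a _ b _ h => edge_inj hγ h)]
  apply (Finset.sum_subset ?_ ?_).symm
  · intro p hp
    simp only [Finset.mem_image, Finset.mem_univ, true_and] at hp
    obtain ⟨m, rfl⟩ := hp; exact hs m
  · intro p hp hp'
    refine hg p hp fun m hm => hp' ?_
    simp only [Finset.mem_image, Finset.mem_univ, true_and]
    exact ⟨m, hm.symm⟩

lemma sum_ite_range {l : ℕ} {γ : Fin (l + 1) → T} (hγ : Function.Injective γ) (i : T) :
    (∑ m : Fin (l+1), if i = γ m then ((l : ℝ) + 1)⁻¹ else 0)
      = if ∃ m, i = γ m then ((l : ℝ) + 1)⁻¹ else 0 := by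
  by_cases h : ∃ m, i = γ m
  · obtain ⟨m, hm⟩ := h
    rw [if_pos ⟨m, hm⟩, Finset.sum_eq_single m, if_pos hm]
    · intro b _ hb; rw [if_neg fun hib => hb (hγ (hib.symm.trans hm))]
    · intro hm'; exact absurd (Finset.mem_univ m) hm'
  · rw [if_neg h, Finset.sum_eq_zero]; intro m _; rw [if_neg fun hm => h ⟨m, hm⟩]

lemma cm_marg_fst {l : ℕ} {γ : Fin (l + 1) → T} (hγ : Function.Injective γ) (i : T) :
    ∑ j, cycleMeasure γ (i, j) = if ∃ m, i = γ m then ((l : ℝ) + 1)⁻¹ else 0 := by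
  have : ∀ j, cycleMeasure γ (i, j)
      = ∑ m : Fin (l+1), if (i, j) = (γ m, γ (m + 1)) then ((l : ℝ) + 1)⁻¹ else 0 :=
    fun j => cm_eq_sum hγ _
  simp_rw [this]
  rw [Finset.sum_comm]
  have h1 : ∀ m : Fin (l+1), (∑ j, if (i, j) = (γ m, γ (m + 1)) then ((l : ℝ) + 1)⁻¹ else 0)
      = if i = γ m then ((l : ℝ) + 1)⁻¹ else 0 := by
    intro m
    by_cases hi : i = γ m
    · rw [if_pos hi, Finset.sum_eq_single (γ (m+1))]
      · rw [if_pos (by rw [hi])]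
      · intro b _ hb; rw [if_neg (by simp [Prod.ext_iff, hb])]
      · intro h; exact absurd (Finset.mem_univ _) h
    · rw [if_neg hi, Finset.sum_eq_zero]
      intro j _; rw [if_neg (by simp [Prod.ext_iff, hi])]
  simp_rw [h1]
  exact sum_ite_range hγ i

lemma cm_marg_snd {l : ℕ} {γ : Fin (l + 1) → T} (hγ : Function.Injective γ) (i : T) :
    ∑ j, cycleMeasure γ (j, i) = if ∃ m, i = γ m then ((l : ℝ) + 1)⁻¹ else 0 := by
  have : ∀ j, cycleMeasure γ (j, i)
      = ∑ m : Fin (l+1), if (j, i) = (γ m, γ (m + 1)) then ((l : ℝ) + 1)⁻¹ else 0 :=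
    fun j => cm_eq_sum hγ _
  simp_rw [this]
  rw [Finset.sum_comm]
  have h1 : ∀ m : Fin (l+1), (∑ j, if (j, i) = (γ m, γ (m + 1)) then ((l : ℝ) + 1)⁻¹ else 0)
      = if i = γ (m+1) then ((l : ℝ) + 1)⁻¹ else 0 := by
    intro m
    by_cases hi : i = γ (m+1)
    · rw [if_pos hi, Finset.sum_eq_single (γ m)]
      · rw [if_pos (by rw [hi])]
      · intro b _ hb; rw [if_neg (by simp [Prod.ext_iff, hb])]
      · intro h; exact absurd (Finset.mem_univ _) h
    · rw [if_neg hi, Finset.sum_eq_zero]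
      intro j _; rw [if_neg (by simp [Prod.ext_iff, hi])]
  simp_rw [h1]
  have := Fintype.sum_equiv (Equiv.addRight (1 : Fin (l+1)))
      (fun m => if i = γ (m + 1) then ((l : ℝ) + 1)⁻¹ else 0)
      (fun m => if i = γ m then ((l : ℝ) + 1)⁻¹ else 0) (fun m => rfl)
  rw [this]
  exact sum_ite_range hγ i

lemma cm_zero_off_edges {l : ℕ} {γ : Fin (l + 1) → T} {p : T × T}
    (h : ∀ m, p ≠ (γ m, γ (m + 1))) : cycleMeasure γ p = 0 := by
  unfold cycleMeasure
  rw [if_neg]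
  rintro ⟨m, hm⟩; exact h m hm

lemma cm_edge {l : ℕ} {γ : Fin (l + 1) → T} (m : Fin (l+1)) :
    cycleMeasure γ (γ m, γ (m + 1)) = ((l : ℝ) + 1)⁻¹ := by
  unfold cycleMeasure
  rw [if_pos ⟨m, rfl⟩]

lemma cm_memM1s {l : ℕ} {γ : Fin (l + 1) → T} (hγ : Function.Injective γ) :
    memM1s (cycleMeasure γ) := by
  have hl : ((l : ℝ) + 1) ≠ 0 := by positivity
  refine ⟨cm_nonneg γ, ?_, ?_⟩
  · rw [show (∑ p : T × T, cycleMeasure γ p) = ∑ p ∈ Finset.univ, cycleMeasure γ p from rfl,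
      sum_edges hγ (fun m => Finset.mem_univ _) _ (fun p _ hp => cm_zero_off_edges hp)]
    simp_rw [cm_edge]
    rw [Finset.sum_const, Finset.card_univ, Fintype.card_fin, nsmul_eq_mul]
    push_cast
    field_simp
  · intro i
    rw [cm_marg_fst hγ, cm_marg_snd hγ]

lemma cm_pair {l : ℕ} {γ : Fin (l + 1) → T} (hγ : Function.Injective γ)
    {A : Finset (T × T)} (hA : ∀ m, (γ m, γ (m + 1)) ∈ A) (f : T → ℝ) :
    ∑ p ∈ A, cycleMeasure γ p * f p.1 = ((l : ℝ) + 1)⁻¹ * ∑ m : Fin (l+1), f (γ m) := by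
  rw [sum_edges hγ hA _ (fun p _ hp => by rw [cm_zero_off_edges hp, zero_mul])]
  simp_rw [cm_edge]
  rw [Finset.mul_sum]

lemma cm_supp {l : ℕ} {γ : Fin (l + 1) → T} {A : Finset (T × T)}
    (hA : ∀ m, (γ m, γ (m + 1)) ∈ A) : ∀ p ∉ A, cycleMeasure γ p = 0 := by
  intro p hp
  exact cm_zero_off_edges fun m hm => hp (hm ▸ hA m)

/-- the value of `I - S` at a cycle measure -/
lemma cm_value {l : ℕ} {γ : Fin (l + 1) → T} (hγ : Function.Injective γ)
    {A : Finset (T × T)} (hA : ∀ m, (γ m, γ (m + 1)) ∈ A) (ρ : T → ℝ) (lam : ℝ)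
    (hopt : (∑ p ∈ A, cycleMeasure γ p * ρ p.1) = lam) :
    (∑ p ∈ A, cycleMeasure γ p * Real.log (cycleMeasure γ p / ∑ k : T, cycleMeasure γ (p.1, k))) -
          ((∑ p ∈ A, ρ p.1 * (cycleMeasure γ p * Real.log (cycleMeasure γ p))) +
            ∑ p ∈ A, cycleMeasure γ p * (ρ p.1 * Real.log (ρ p.1)))
      = lam * Real.log ((l : ℝ) + 1) -
          ((l : ℝ) + 1)⁻¹ * ∑ m : Fin (l + 1), ρ (γ m) * Real.log (ρ (γ m)) := by
  have hl : (0:ℝ) < (l : ℝ) + 1 := by positivity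
  have hc : ((l : ℝ) + 1)⁻¹ ≠ 0 := by positivity
  have h1 : (∑ p ∈ A, cycleMeasure γ p *
      Real.log (cycleMeasure γ p / ∑ k : T, cycleMeasure γ (p.1, k))) = 0 := by
    rw [sum_edges hγ hA _ (fun p _ hp => by rw [cm_zero_off_edges hp, zero_mul])]
    apply Finset.sum_eq_zero
    intro m _
    rw [cm_edge, cm_marg_fst hγ, if_pos ⟨m, rfl⟩, div_self hc, Real.log_one, mul_zero]
  have h2 : (∑ p ∈ A, ρ p.1 * (cycleMeasure γ p * Real.log (cycleMeasure γ p)))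
      = -(lam * Real.log ((l : ℝ) + 1)) := by
    rw [sum_edges hγ hA _ (fun p _ hp => by rw [cm_zero_off_edges hp, zero_mul, mul_zero])]
    simp_rw [cm_edge]
    rw [Real.log_inv]
    rw [← hopt, cm_pair hγ hA]
    simp only [Finset.mul_sum, Finset.sum_mul, neg_eq_iff_eq_neg, ← Finset.sum_neg_distrib]
    apply Finset.sum_congr rfl
    intro m _
    ring
  have h3 : (∑ p ∈ A, cycleMeasure γ p * (ρ p.1 * Real.log (ρ p.1)))
      = ((l : ℝ) + 1)⁻¹ * ∑ m : Fin (l + 1), ρ (γ m) * Real.log (ρ (γ m)) :=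
    cm_pair hγ hA (fun i => ρ i * Real.log (ρ i))
  rw [h1, h2, h3]
  ring

/-- From iterating a function one can extract a simple cycle within the orbit. -/
lemma exists_cycle (f : T → T) (i₀ : T) :
    ∃ (l : ℕ) (γ : Fin (l+1) → T), Function.Injective γ ∧
      (∀ m, γ (m + 1) = f (γ m)) ∧ (∀ m, ∃ n, γ m = f^[n] i₀) := by
  classical
  set x : ℕ → T := fun n => f^[n] i₀ with hx
  have hQ : ∃ b, ∃ a < b, x a = x b := by
    obtain ⟨a, b, hab, h⟩ := Fintype.exists_ne_map_eq_of_card_lt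
      (fun n : Fin (Fintype.card T + 1) => x n) (by simp)
    rcases lt_or_gt_of_ne (fun h' : (a:ℕ) = (b:ℕ) => hab (Fin.ext h')) with h' | h'
    · exact ⟨b, a, h', h⟩
    · exact ⟨a, b, h', h.symm⟩
  classical
  let b := Nat.find hQ
  obtain ⟨a, hab, hxab⟩ : ∃ a < b, x a = x b := Nat.find_spec hQ
  have hb_min : ∀ b' < b, ¬ ∃ a' < b', x a' = x b' := fun b' hb' => Nat.find_min hQ hb'
  have hpos : 0 < b - a := Nat.sub_pos_of_lt hab
  obtain ⟨l, hl⟩ : ∃ l, b - a = l + 1 := ⟨b - a - 1, by omega⟩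
  refine ⟨l, fun m => x (a + m), ?_, ?_, fun m => ⟨a + m, rfl⟩⟩
  · intro m m' h
    by_contra hne
    rcases lt_or_gt_of_ne (fun h' : (m:ℕ) = (m':ℕ) => hne (Fin.ext h')) with h' | h'
    · exact hb_min (a + m') (by omega) ⟨a + m, by omega, h⟩
    · exact hb_min (a + m) (by omega) ⟨a + m', by omega, h.symm⟩
  · intro m
    by_cases hm : (m : ℕ) + 1 < l + 1
    · have : ((m + 1 : Fin (l+1)) : ℕ) = (m : ℕ) + 1 := by
        rw [Fin.add_def]; simp [Nat.mod_eq_of_lt hm]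
      show x (a + ((m + 1 : Fin (l+1)) : ℕ)) = f (x (a + m))
      rw [this, ← Nat.add_assoc, hx]
      simp [Function.iterate_succ_apply']
    · have hm' : (m : ℕ) = l := by omega
      have h1 : ((m + 1 : Fin (l+1)) : ℕ) = 0 := by
        rw [Fin.add_def]; simp [hm']
      show x (a + ((m + 1 : Fin (l+1)) : ℕ)) = f (x (a + m))
      rw [h1, Nat.add_zero, hxab]
      have : b = (a + l) + 1 := by omega
      rw [this, hm', hx]
      simp [Function.iterate_succ_apply']

/-- any measure in M₁ˢ has a simple cycle in its support -/
lemma exists_pos_cycle {ν : T × T → ℝ} (hν : memM1s ν) :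
    ∃ (l : ℕ) (γ : Fin (l+1) → T), Function.Injective γ ∧
      ∀ m, 0 < ν (γ m, γ (m + 1)) := by
  classical
  obtain ⟨hpos, hsum, hmarg⟩ := hν
  -- step function
  let f : T → T := fun i => if h : ∃ j, 0 < ν (i, j) then h.choose else Classical.arbitrary T
  have hf : ∀ i, (∃ j, 0 < ν (i, j)) → 0 < ν (i, f i) := by
    intro i h
    simp only [f, dif_pos h]
    exact h.choose_spec
  have hstep : ∀ i, (∃ j, 0 < ν (i, j)) → ∃ j, 0 < ν (f i, j) := by
    intro i h
    have h1 : 0 < ν (i, f i) := hf i h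
    have h2 : 0 < ∑ j, ν (j, f i) :=
      lt_of_lt_of_le h1 (Finset.single_le_sum (fun j _ => hpos (j, f i)) (Finset.mem_univ i))
    rw [← hmarg] at h2
    by_contra hc
    push_neg at hc
    have : ∑ j, ν (f i, j) ≤ 0 := Finset.sum_nonpos fun j _ => hc j
    linarith
  -- starting point
  have h0 : ∃ p : T × T, 0 < ν p := by
    by_contra hc
    push_neg at hc
    have : ∑ p : T × T, ν p ≤ 0 := Finset.sum_nonpos fun p _ => hc p
    linarith
  obtain ⟨⟨i₀, j₀⟩, hp0⟩ := h0
  have hP0 : ∃ j, 0 < ν (i₀, j) := ⟨j₀, hp0⟩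
  have horb : ∀ n, ∃ j, 0 < ν (f^[n] i₀, j) := by
    intro n
    induction n with
    | zero => exact hP0
    | succ n ih =>
        rw [Function.iterate_succ_apply']
        exact hstep _ ih
  obtain ⟨l, γ, hinj, hnext, hin⟩ := exists_cycle f i₀
  refine ⟨l, γ, hinj, fun m => ?_⟩
  obtain ⟨n, hn⟩ := hin m
  rw [hnext m, hn]
  exact hf _ (horb n)

/-- decomposition of a measure in M₁ˢ into a convex combination of cycle measures -/
lemma decomp : ∀ (n : ℕ) (ν : T × T → ℝ), memM1s ν →
    (Finset.univ.filter fun p => ν p ≠ 0).card ≤ n →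
    ∃ (k : ℕ) (w : Fin k → ℝ) (cyc : Fin k → (Σ l : ℕ, Fin (l+1) → T)),
      (∀ c, 0 < w c) ∧ (∑ c, w c = 1) ∧
      (∀ c, Function.Injective (cyc c).2) ∧
      (∀ c m, 0 < ν ((cyc c).2 m, (cyc c).2 (m+1))) ∧
      (∀ p, ν p = ∑ c, w c * cycleMeasure (cyc c).2 p) := by
  intro n
  induction n with
  | zero =>
      intro ν hν hcard
      exfalso
      have : ∀ p : T × T, ν p = 0 := by
        intro p
        by_contra hp
        have : (Finset.univ.filter fun p => ν p ≠ 0).Nonempty :=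
          ⟨p, Finset.mem_filter.2 ⟨Finset.mem_univ p, hp⟩⟩
        have := Finset.card_pos.2 this
        omega
      have hz := hν.2.1
      rw [Finset.sum_eq_zero (fun p _ => this p)] at hz
      norm_num at hz
  | succ n ih =>
      intro ν hν hcard
      obtain ⟨l, γ, hinj, hedge⟩ := exists_pos_cycle hν
      have hl : (0:ℝ) < (l : ℝ) + 1 := by positivity
      set c0 : ℝ := ((l : ℝ) + 1)⁻¹ with hc0
      have hc0pos : 0 < c0 := by positivity
      set μ := cycleMeasure γ with hμ
      obtain ⟨m₀, -, hm₀⟩ := Finset.exists_min_image Finset.univ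
        (fun m : Fin (l+1) => ν (γ m, γ (m+1))) ⟨0, Finset.mem_univ 0⟩
      set ε := ν (γ m₀, γ (m₀+1)) with hε
      have hεpos : 0 < ε := hedge m₀
      set t := ε / c0 with ht
      have htpos : 0 < t := div_pos hεpos hc0pos
      have htc0 : t * c0 = ε := div_mul_cancel₀ ε (ne_of_gt hc0pos)
      have hdom : ∀ p, t * μ p ≤ ν p := by
        intro p
        by_cases h : ∃ m, p = (γ m, γ (m + 1))
        · obtain ⟨m, rfl⟩ := h
          rw [hμ, cm_edge m, ← hc0, htc0]
          exact hm₀ m (Finset.mem_univ m)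
        · rw [hμ, cm_zero_off_edges (fun m hm => h ⟨m, hm⟩), mul_zero]
          exact hν.1 p
      have hμM : memM1s μ := cm_memM1s hinj
      have ht1 : t ≤ 1 := by
        have h1 : ∑ p : T × T, t * μ p ≤ ∑ p : T × T, ν p :=
          Finset.sum_le_sum fun p _ => hdom p
        rw [← Finset.mul_sum, hμM.2.1, hν.2.1, mul_one] at h1
        exact h1
      rcases eq_or_lt_of_le ht1 with heq | hlt
      · -- t = 1 : ν = μ
        refine ⟨1, fun _ => 1, fun _ => ⟨l, γ⟩, fun _ => one_pos, by simp, fun _ => hinj,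
          fun _ m => hedge m, fun p => ?_⟩
        have hzero : ∑ p : T × T, (ν p - μ p) = 0 := by
          rw [Finset.sum_sub_distrib, hμM.2.1, hν.2.1, sub_self]
        have hnn : ∀ p : T × T, 0 ≤ ν p - μ p := by
          intro p
          have := hdom p
          rw [heq, one_mul] at this
          linarith
        have := (Finset.sum_eq_zero_iff_of_nonneg (fun p _ => hnn p)).1 hzero p
          (Finset.mem_univ p)
        simp only [Fin.sum_univ_one, one_mul]
        show ν p = μ p
        linarith
      · -- t < 1 : peel off
        set ν' : T × T → ℝ := fun p => (1 - t)⁻¹ * (ν p - t * μ p) with hν'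
        have h1t : (0:ℝ) < 1 - t := by linarith
        have hν'M : memM1s ν' := by
          refine ⟨fun p => ?_, ?_, fun i => ?_⟩
          · exact mul_nonneg (by positivity) (by linarith [hdom p])
          · simp only [hν']
            rw [← Finset.mul_sum, Finset.sum_sub_distrib, ← Finset.mul_sum, hμM.2.1, hν.2.1]
            field_simp
          · simp only [hν']
            simp only [Finset.sum_sub_distrib, ← Finset.mul_sum]
            rw [hν.2.2 i, hμM.2.2 i]
        have hrecon : ∀ p, ν p = t * μ p + (1 - t) * ν' p := by
          intro p
          simp only [hν']
          field_simp
          ring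
        have hsupp : ∀ p, ν p = 0 → ν' p = 0 := by
          intro p hp
          have h2 : μ p = 0 := by
            apply cm_zero_off_edges
            intro m hm
            rw [hm] at hp
            exact absurd hp (ne_of_gt (hedge m))
          simp [hν', hp, h2]
        have hcard' : (Finset.univ.filter fun p => ν' p ≠ 0).card ≤ n := by
          have hss : (Finset.univ.filter fun p => ν' p ≠ 0)
              ⊂ (Finset.univ.filter fun p => ν p ≠ 0) := by
            constructor
            · intro p hp
              simp only [Finset.mem_filter, Finset.mem_univ, true_and] at hp ⊢
              intro h; exact hp (hsupp p h)
            · intro hsub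
              have hmem : (γ m₀, γ (m₀+1)) ∈ (Finset.univ.filter fun p => ν p ≠ 0) :=
                Finset.mem_filter.2 ⟨Finset.mem_univ _, ne_of_gt hεpos⟩
              have := hsub hmem
              simp only [Finset.mem_filter, Finset.mem_univ, true_and] at this
              apply this
              simp only [hν', hμ, cm_edge m₀, ← hc0, htc0, ← hε, sub_self, mul_zero]
          have := Finset.card_lt_card hss
          omega
        obtain ⟨k, w, cyc, hwpos, hwsum, hcinj, hcpos, hdec⟩ := ih ν' hν'M hcard'
        refine ⟨k + 1, Fin.cons t (fun c => (1 - t) * w c), Fin.cons ⟨l, γ⟩ cyc, ?_, ?_, ?_, ?_, ?_⟩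
        · intro c
          refine Fin.cases ?_ ?_ c
          · exact htpos
          · intro c'; exact mul_pos h1t (hwpos c')
        · rw [Fin.sum_cons, ← Finset.mul_sum, hwsum, mul_one]
          ring
        · intro c
          refine Fin.cases ?_ ?_ c
          · exact hinj
          · intro c'; exact hcinj c'
        · intro c
          refine Fin.cases ?_ ?_ c
          · exact hedge
          · intro c' m
            rw [hrecon]
            exact add_pos_of_nonneg_of_pos
              (mul_nonneg htpos.le (cm_nonneg γ _)) (mul_pos h1t (hcpos c' m))
        · intro p
          rw [hrecon p, hdec p, Finset.mul_sum, hμ, Fin.sum_univ_succ]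
          congr 1
          exact Finset.sum_congr rfl fun c _ => (mul_assoc (1 - t) (w c) _).symm

lemma sum_fst {A : Finset (T × T)} {ν : T × T → ℝ} (hsupp : ∀ p ∉ A, ν p = 0) (f : T → ℝ) :
    ∑ p ∈ A, ν p * f p.1 = ∑ i, (∑ j, ν (i, j)) * f i := by
  rw [Finset.sum_subset (Finset.subset_univ A)
    (fun p _ hp => by rw [hsupp p hp, zero_mul]), Fintype.sum_prod_type]
  exact Finset.sum_congr rfl fun i _ => by rw [Finset.sum_mul]

/-- the `I - S` value dominates the marginal functional `Φ` -/
lemma value_ge {A : Finset (T × T)} {ν : T × T → ℝ} (hν : memM1s ν)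
    (hsupp : ∀ p ∉ A, ν p = 0) {ρ : T → ℝ} (hρ : ∀ i, 1 ≤ ρ i) :
    (∑ p ∈ A, ν p * Real.log (ν p / ∑ k : T, ν (p.1, k))) -
          ((∑ p ∈ A, ρ p.1 * (ν p * Real.log (ν p))) +
            ∑ p ∈ A, ν p * (ρ p.1 * Real.log (ρ p.1)))
      ≥ ∑ i, (ρ i * Real.negMulLog (∑ j, ν (i, j))
          - ρ i * Real.log (ρ i) * (∑ j, ν (i, j))) := by
  have key : ∀ p ∈ A, ν p * Real.log (ν p / ∑ k : T, ν (p.1, k))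
      - ρ p.1 * (ν p * Real.log (ν p))
      ≥ - (ν p * (ρ p.1 * Real.log (∑ k : T, ν (p.1, k)))) := by
    intro p _
    rcases eq_or_lt_of_le (hν.1 p) with h0 | hpos
    · rw [← h0]
      simp
    · have hmg : 0 < ∑ k : T, ν (p.1, k) := by
        refine lt_of_lt_of_le hpos ?_
        have : ν (p.1, p.2) ≤ ∑ k : T, ν (p.1, k) :=
          Finset.single_le_sum (fun k _ => hν.1 (p.1, k)) (Finset.mem_univ p.2)
        simpa using this
      have hle : ν p ≤ ∑ k : T, ν (p.1, k) := by
        have : ν (p.1, p.2) ≤ ∑ k : T, ν (p.1, k) :=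
          Finset.single_le_sum (fun k _ => hν.1 (p.1, k)) (Finset.mem_univ p.2)
        simpa using this
      rw [Real.log_div (ne_of_gt hpos) (ne_of_gt hmg)]
      have hlog : Real.log (ν p) ≤ Real.log (∑ k : T, ν (p.1, k)) :=
        Real.log_le_log hpos hle
      have hρ1 : 1 ≤ ρ p.1 := hρ p.1
      nlinarith [mul_nonneg (sub_nonneg.2 hρ1) (mul_nonneg hpos.le (sub_nonneg.2 hlog))]
  have h1 : ∑ p ∈ A, (ν p * Real.log (ν p / ∑ k : T, ν (p.1, k))
        - ρ p.1 * (ν p * Real.log (ν p)))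
      ≥ ∑ p ∈ A, - (ν p * (ρ p.1 * Real.log (∑ k : T, ν (p.1, k)))) :=
    Finset.sum_le_sum key
  rw [Finset.sum_sub_distrib] at h1
  have h2 : ∑ p ∈ A, - (ν p * (ρ p.1 * Real.log (∑ k : T, ν (p.1, k))))
      = - ∑ i, (∑ j, ν (i, j)) * (ρ i * Real.log (∑ k : T, ν (i, k))) := by
    rw [Finset.sum_neg_distrib]
    exact congrArg Neg.neg (sum_fst hsupp (fun i => ρ i * Real.log (∑ k : T, ν (i, k))))
  have h3 : ∑ p ∈ A, ν p * (ρ p.1 * Real.log (ρ p.1))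
      = ∑ i, (∑ j, ν (i, j)) * (ρ i * Real.log (ρ i)) :=
    sum_fst hsupp (fun i => ρ i * Real.log (ρ i))
  rw [h2] at h1
  rw [h3]
  have h4 : ∑ i, (ρ i * Real.negMulLog (∑ j, ν (i, j))
        - ρ i * Real.log (ρ i) * (∑ j, ν (i, j)))
      = (- ∑ i, (∑ j, ν (i, j)) * (ρ i * Real.log (∑ k : T, ν (i, k))))
        - ∑ i, (∑ j, ν (i, j)) * (ρ i * Real.log (ρ i)) := by
    rw [← Finset.sum_neg_distrib, ← Finset.sum_sub_distrib]
    apply Finset.sum_congr rfl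
    intro i _
    rw [Real.negMulLog]
    ring
  rw [h4]
  linarith

lemma phi_concave {ρi : ℝ} (hρi : 1 ≤ ρi) :
    ConcaveOn ℝ (Set.Ici (0:ℝ))
      (fun x => ρi * Real.negMulLog x - ρi * Real.log ρi * x) := by
  have h1 : ConcaveOn ℝ (Set.Ici (0:ℝ)) (fun x => ρi * Real.negMulLog x) := by
    have := Real.concaveOn_negMulLog.smul (le_trans zero_le_one hρi)
    simpa [smul_eq_mul] using this
  have h2 : ConvexOn ℝ (Set.Ici (0:ℝ)) (fun x => ρi * Real.log ρi * x) := by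
    refine ⟨convex_Ici 0, fun x _ y _ s t _ _ _ => le_of_eq ?_⟩
    simp only [smul_eq_mul]
    ring
  exact h1.sub h2

lemma jensen_phi {k : ℕ} (w : Fin k → ℝ) (hw0 : ∀ c, 0 ≤ w c) (hw1 : ∑ c, w c = 1)
    (g : Fin k → T → ℝ) (hg : ∀ c i, 0 ≤ g c i) (ρ : T → ℝ) (hρ : ∀ i, 1 ≤ ρ i) :
    ∑ c, w c * (∑ i, (ρ i * Real.negMulLog (g c i) - ρ i * Real.log (ρ i) * g c i))
      ≤ ∑ i, (ρ i * Real.negMulLog (∑ c, w c * g c i)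
          - ρ i * Real.log (ρ i) * (∑ c, w c * g c i)) := by
  have key : ∀ i, ∑ c, w c * (ρ i * Real.negMulLog (g c i) - ρ i * Real.log (ρ i) * g c i)
      ≤ ρ i * Real.negMulLog (∑ c, w c * g c i)
        - ρ i * Real.log (ρ i) * (∑ c, w c * g c i) := by
    intro i
    have h := (phi_concave (hρ i)).le_map_sum (t := Finset.univ) (w := w)
      (p := fun c => g c i) (fun c _ => hw0 c) hw1 (fun c _ => Set.mem_Ici.2 (hg c i))
    simpa [smul_eq_mul] using h
  calc ∑ c, w c * (∑ i, (ρ i * Real.negMulLog (g c i) - ρ i * Real.log (ρ i) * g c i))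
      = ∑ i, ∑ c, w c * (ρ i * Real.negMulLog (g c i) - ρ i * Real.log (ρ i) * g c i) := by
        simp_rw [Finset.mul_sum]
        exact Finset.sum_comm
    _ ≤ _ := Finset.sum_le_sum fun i _ => key i

lemma phi_cm {l : ℕ} {γ : Fin (l+1) → T} (hinj : Function.Injective γ) (ρ : T → ℝ) (lam : ℝ)
    (hopt : ((l:ℝ)+1)⁻¹ * ∑ m : Fin (l+1), ρ (γ m) = lam) :
    ∑ i, (ρ i * Real.negMulLog (∑ j, cycleMeasure γ (i, j))
        - ρ i * Real.log (ρ i) * (∑ j, cycleMeasure γ (i, j)))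
      = lam * Real.log ((l : ℝ) + 1) -
          ((l : ℝ) + 1)⁻¹ * ∑ m : Fin (l + 1), ρ (γ m) * Real.log (ρ (γ m)) := by
  have hl : (0:ℝ) < (l : ℝ) + 1 := by positivity
  simp_rw [cm_marg_fst hinj]
  rw [← Finset.sum_subset (Finset.subset_univ (Finset.image γ Finset.univ)) ?_]
  · rw [Finset.sum_image (fun a _ b _ h => hinj h)]
    have hterm : ∀ m : Fin (l+1),
        (ρ (γ m) * Real.negMulLog (if ∃ m', γ m = γ m' then ((l:ℝ)+1)⁻¹ else 0)
          - ρ (γ m) * Real.log (ρ (γ m)) * (if ∃ m', γ m = γ m' then ((l:ℝ)+1)⁻¹ else 0))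
        = ρ (γ m) * (((l:ℝ)+1)⁻¹ * Real.log ((l:ℝ)+1))
          - ρ (γ m) * Real.log (ρ (γ m)) * ((l:ℝ)+1)⁻¹ := by
      intro m
      rw [if_pos ⟨m, rfl⟩, Real.negMulLog, Real.log_inv]
      ring
    rw [Finset.sum_congr rfl (fun m _ => hterm m), Finset.sum_sub_distrib,
      ← Finset.sum_mul, ← Finset.sum_mul]
    rw [show (∑ m : Fin (l+1), ρ (γ m)) * (((l:ℝ)+1)⁻¹ * Real.log ((l:ℝ)+1))
        = (((l:ℝ)+1)⁻¹ * ∑ m : Fin (l+1), ρ (γ m)) * Real.log ((l:ℝ)+1) by ring, hopt]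
    rw [mul_comm (∑ m : Fin (l+1), ρ (γ m) * Real.log (ρ (γ m))) (((l:ℝ)+1)⁻¹)]
  · intro i _ hi
    rw [if_neg, Real.negMulLog_zero]
    · ring
    · rintro ⟨m, rfl⟩
      exact hi (Finset.mem_image_of_mem γ (Finset.mem_univ m))

end helpers

open Finset in
/-- Case `ρ_{ij} = ρ_i ≥ 1`.  With `lam = λ(ρ)` the maximal value of
`⟨μ,ρ⟩ = ∑_{(i,j)∈A} μ(i,j) ρ_i` over probability measures with equal marginals, the
minimum of `I(ν) - S(ν)` over the maximizers `ν ∈ Λ(ρ)` (supported on `A`) equals the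
minimum over the optimal simple cycles `γ ∈ Γ(ρ)` of
`λ(ρ) log |γ| - |γ|⁻¹ ∑_m ρ_{i_m} log ρ_{i_m}`. -/
theorem stmt17 {T : Type*} [Fintype T] [DecidableEq T] [Nonempty T]
    (A : Finset (T × T)) (hout : ∀ i : T, ∃ j, (i, j) ∈ A)
    (ρ : T → ℝ) (hρ : ∀ i, 1 ≤ ρ i) (lam : ℝ)
    (hlam : IsGreatest ((fun μ : T × T → ℝ => ∑ p ∈ A, μ p * ρ p.1) ''
      {μ : T × T → ℝ | memM1s μ ∧ ∀ p ∉ A, μ p = 0}) lam) :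
    sInf {v : ℝ | ∃ ν : T × T → ℝ, memM1s ν ∧ (∀ p ∉ A, ν p = 0) ∧
        (∑ p ∈ A, ν p * ρ p.1) = lam ∧
        v = (∑ p ∈ A, ν p * Real.log (ν p / ∑ k : T, ν (p.1, k))) -
          ((∑ p ∈ A, ρ p.1 * (ν p * Real.log (ν p))) +
            ∑ p ∈ A, ν p * (ρ p.1 * Real.log (ρ p.1)))} =
      sInf {v : ℝ | ∃ (l : ℕ) (γ : Fin (l + 1) → T), Function.Injective γ ∧
        (∀ m, (γ m, γ (m + 1)) ∈ A) ∧
        (∑ p ∈ A, cycleMeasure γ p * ρ p.1) = lam ∧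
        v = lam * Real.log ((l : ℝ) + 1) -
          ((l : ℝ) + 1)⁻¹ * ∑ m : Fin (l + 1), ρ (γ m) * Real.log (ρ (γ m))} := by
  classical
  set Sval := {v : ℝ | ∃ ν : T × T → ℝ, memM1s ν ∧ (∀ p ∉ A, ν p = 0) ∧
        (∑ p ∈ A, ν p * ρ p.1) = lam ∧
        v = (∑ p ∈ A, ν p * Real.log (ν p / ∑ k : T, ν (p.1, k))) -
          ((∑ p ∈ A, ρ p.1 * (ν p * Real.log (ν p))) +
            ∑ p ∈ A, ν p * (ρ p.1 * Real.log (ρ p.1)))} with hSval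
  set Scyc := {v : ℝ | ∃ (l : ℕ) (γ : Fin (l + 1) → T), Function.Injective γ ∧
        (∀ m, (γ m, γ (m + 1)) ∈ A) ∧
        (∑ p ∈ A, cycleMeasure γ p * ρ p.1) = lam ∧
        v = lam * Real.log ((l : ℝ) + 1) -
          ((l : ℝ) + 1)⁻¹ * ∑ m : Fin (l + 1), ρ (γ m) * Real.log (ρ (γ m))} with hScyc
  obtain ⟨μ₀, ⟨hμ₀M, hμ₀supp⟩, hμ₀val⟩ := hlam.1
  have hlam1 : 1 ≤ lam := by
    rw [← hμ₀val]
    calc (1:ℝ) = ∑ p : T × T, μ₀ p := hμ₀M.2.1.symm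
      _ = ∑ p ∈ A, μ₀ p :=
          (Finset.sum_subset (Finset.subset_univ A) (fun p _ hp => hμ₀supp p hp)).symm
      _ ≤ ∑ p ∈ A, μ₀ p * ρ p.1 :=
          Finset.sum_le_sum fun p _ => le_mul_of_one_le_right (hμ₀M.1 p) (hρ p.1)
  set B := ∑ i : T, ρ i * Real.log (ρ i) with hB
  have hρlog : ∀ i : T, 0 ≤ ρ i * Real.log (ρ i) :=
    fun i => mul_nonneg (le_trans zero_le_one (hρ i)) (Real.log_nonneg (hρ i))
  have hbd : ∀ v ∈ Scyc, -B ≤ v := by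
    rintro v ⟨l, γ, hinj, hA, hopt, rfl⟩
    have h1 : 0 ≤ lam * Real.log ((l:ℝ)+1) :=
      mul_nonneg (by linarith)
        (Real.log_nonneg (by have h : (0:ℝ) ≤ (l:ℝ) := Nat.cast_nonneg l; linarith))
    have hsum : ∑ m : Fin (l+1), ρ (γ m) * Real.log (ρ (γ m)) ≤ B := by
      rw [show ∑ m : Fin (l+1), ρ (γ m) * Real.log (ρ (γ m))
          = ∑ i ∈ Finset.image γ Finset.univ, ρ i * Real.log (ρ i) from
          (Finset.sum_image (f := fun i => ρ i * Real.log (ρ i)) (g := γ)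
            (fun a _ b _ h => hinj h)).symm]
      exact Finset.sum_le_sum_of_subset_of_nonneg (Finset.subset_univ _)
        (fun i _ _ => hρlog i)
    have hnn : 0 ≤ ∑ m : Fin (l+1), ρ (γ m) * Real.log (ρ (γ m)) :=
      Finset.sum_nonneg fun m _ => hρlog (γ m)
    have hc1 : ((l:ℝ)+1)⁻¹ ≤ 1 := by
      rw [inv_le_one_iff₀]
      right
      push_cast
      linarith [Nat.cast_nonneg (α := ℝ) l]
    have h2 : ((l:ℝ)+1)⁻¹ * ∑ m : Fin (l+1), ρ (γ m) * Real.log (ρ (γ m)) ≤ B :=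
      le_trans (mul_le_of_le_one_left hnn hc1) hsum
    linarith
  have hbdd : BddBelow Scyc := ⟨-B, hbd⟩
  -- decomposition into optimal cycles
  have decompν : ∀ ν : T × T → ℝ, memM1s ν → (∀ p ∉ A, ν p = 0) →
      (∑ p ∈ A, ν p * ρ p.1) = lam →
      ∃ (k : ℕ) (w : Fin k → ℝ) (cyc : Fin k → (Σ l : ℕ, Fin (l+1) → T)), k ≠ 0 ∧
        (∀ c, 0 < w c) ∧ (∑ c, w c = 1) ∧
        (∀ c, Function.Injective (cyc c).2) ∧
        (∀ c m, ((cyc c).2 m, (cyc c).2 (m+1)) ∈ A) ∧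
        (∀ c, ((((cyc c).1 : ℝ)+1)⁻¹ * ∑ m : Fin ((cyc c).1 + 1), ρ ((cyc c).2 m)) = lam) ∧
        (∀ p, ν p = ∑ c, w c * cycleMeasure (cyc c).2 p) := by
    intro ν hν hsupp hopt
    obtain ⟨k, w, cyc, hwpos, hwsum, hcinj, hcpos, hdec⟩ :=
      decomp (Finset.univ.filter fun p => ν p ≠ 0).card ν hν le_rfl
    have hk : k ≠ 0 := by
      rintro rfl
      rw [Finset.univ_eq_empty, Finset.sum_empty] at hwsum
      norm_num at hwsum
    have hAe : ∀ c m, ((cyc c).2 m, (cyc c).2 (m+1)) ∈ A := by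
      intro c m
      by_contra h
      exact absurd (hsupp _ h) (ne_of_gt (hcpos c m))
    have ha_le : ∀ c, ∑ p ∈ A, cycleMeasure (cyc c).2 p * ρ p.1 ≤ lam := fun c =>
      hlam.2 ⟨cycleMeasure (cyc c).2, ⟨cm_memM1s (hcinj c), cm_supp (hAe c)⟩, rfl⟩
    have hsplit : ∑ c, w c * (∑ p ∈ A, cycleMeasure (cyc c).2 p * ρ p.1) = lam := by
      rw [← hopt]
      calc ∑ c, w c * (∑ p ∈ A, cycleMeasure (cyc c).2 p * ρ p.1)
          = ∑ c, ∑ p ∈ A, w c * cycleMeasure (cyc c).2 p * ρ p.1 := by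
            apply Finset.sum_congr rfl
            intro c _
            rw [Finset.mul_sum]
            exact Finset.sum_congr rfl fun p _ => by ring
        _ = ∑ p ∈ A, ∑ c, w c * cycleMeasure (cyc c).2 p * ρ p.1 := Finset.sum_comm
        _ = ∑ p ∈ A, ν p * ρ p.1 := by
            apply Finset.sum_congr rfl
            intro p _
            rw [hdec p, Finset.sum_mul]
    have heq : ∀ c, ∑ p ∈ A, cycleMeasure (cyc c).2 p * ρ p.1 = lam := by
      have hzero : ∑ c, w c * (lam - ∑ p ∈ A, cycleMeasure (cyc c).2 p * ρ p.1) = 0 := by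
        simp_rw [mul_sub]
        rw [Finset.sum_sub_distrib, hsplit, ← Finset.sum_mul, hwsum, one_mul, sub_self]
      intro c
      have := (Finset.sum_eq_zero_iff_of_nonneg (fun c _ =>
        mul_nonneg (hwpos c).le (sub_nonneg.2 (ha_le c)))).1 hzero c (Finset.mem_univ c)
      rcases mul_eq_zero.1 this with h | h
      · exact absurd h (ne_of_gt (hwpos c))
      · linarith
    refine ⟨k, w, cyc, hk, hwpos, hwsum, hcinj, hAe, fun c => ?_, hdec⟩
    rw [← cm_pair (hcinj c) (hAe c) ρ]
    exact heq c
  have hne : Scyc.Nonempty := by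
    obtain ⟨k, w, cyc, hk, _, _, hcinj, hAe, hopt', _⟩ := decompν μ₀ hμ₀M hμ₀supp hμ₀val
    have c0 : Fin k := ⟨0, Nat.pos_of_ne_zero hk⟩
    exact ⟨lam * Real.log (((cyc c0).1:ℝ)+1) -
      (((cyc c0).1:ℝ)+1)⁻¹ * ∑ m : Fin ((cyc c0).1 + 1), ρ ((cyc c0).2 m) *
        Real.log (ρ ((cyc c0).2 m)),
      (cyc c0).1, (cyc c0).2, hcinj c0, hAe c0,
      by rw [cm_pair (hcinj c0) (hAe c0) ρ]; exact hopt' c0, rfl⟩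
  have hsub : Scyc ⊆ Sval := by
    rintro v ⟨l, γ, hinj, hA, hopt, rfl⟩
    exact ⟨cycleMeasure γ, cm_memM1s hinj, cm_supp hA, hopt,
      (cm_value hinj hA ρ lam hopt).symm⟩
  have hmain : ∀ v ∈ Sval, sInf Scyc ≤ v := by
    rintro v ⟨ν, hν, hsupp, hopt, rfl⟩
    obtain ⟨k, w, cyc, hk, hwpos, hwsum, hcinj, hAe, hopt', hdec⟩ := decompν ν hν hsupp hopt
    have hval := value_ge hν hsupp hρ
    have hmg : ∀ i, (∑ j, ν (i, j)) = ∑ c, w c * (∑ j, cycleMeasure (cyc c).2 (i, j)) := by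
      intro i
      simp_rw [hdec, Finset.mul_sum]
      exact Finset.sum_comm
    have hjen := jensen_phi w (fun c => (hwpos c).le) hwsum
      (fun c i => ∑ j, cycleMeasure (cyc c).2 (i, j))
      (fun c i => Finset.sum_nonneg fun j _ => cm_nonneg _ _) ρ hρ
    have hΦeq : (∑ i, (ρ i * Real.negMulLog (∑ j, ν (i, j))
          - ρ i * Real.log (ρ i) * (∑ j, ν (i, j))))
        = ∑ i, (ρ i * Real.negMulLog (∑ c, w c * (∑ j, cycleMeasure (cyc c).2 (i, j)))
          - ρ i * Real.log (ρ i) * (∑ c, w c * (∑ j, cycleMeasure (cyc c).2 (i, j)))) :=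
      Finset.sum_congr rfl fun i _ => by rw [hmg i]
    have hphi : ∀ c, (∑ i, (ρ i * Real.negMulLog (∑ j, cycleMeasure (cyc c).2 (i, j))
          - ρ i * Real.log (ρ i) * (∑ j, cycleMeasure (cyc c).2 (i, j))))
        = lam * Real.log (((cyc c).1 : ℝ) + 1) -
          (((cyc c).1 : ℝ) + 1)⁻¹ * ∑ m : Fin ((cyc c).1 + 1),
            ρ ((cyc c).2 m) * Real.log (ρ ((cyc c).2 m)) :=
      fun c => phi_cm (hcinj c) ρ lam (hopt' c)
    have hmem : ∀ c, (lam * Real.log (((cyc c).1 : ℝ) + 1) -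
        (((cyc c).1 : ℝ) + 1)⁻¹ * ∑ m : Fin ((cyc c).1 + 1),
          ρ ((cyc c).2 m) * Real.log (ρ ((cyc c).2 m))) ∈ Scyc := fun c =>
      ⟨(cyc c).1, (cyc c).2, hcinj c, hAe c,
        by rw [cm_pair (hcinj c) (hAe c) ρ]; exact hopt' c, rfl⟩
    have hRlb : ∀ c, sInf Scyc ≤ lam * Real.log (((cyc c).1 : ℝ) + 1) -
        (((cyc c).1 : ℝ) + 1)⁻¹ * ∑ m : Fin ((cyc c).1 + 1),
          ρ ((cyc c).2 m) * Real.log (ρ ((cyc c).2 m)) :=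
      fun c => csInf_le hbdd (hmem c)
    calc sInf Scyc = ∑ c, w c * sInf Scyc := by
          rw [← Finset.sum_mul, hwsum, one_mul]
      _ ≤ ∑ c, w c * (lam * Real.log (((cyc c).1 : ℝ) + 1) -
            (((cyc c).1 : ℝ) + 1)⁻¹ * ∑ m : Fin ((cyc c).1 + 1),
              ρ ((cyc c).2 m) * Real.log (ρ ((cyc c).2 m))) :=
          Finset.sum_le_sum fun c _ => mul_le_mul_of_nonneg_left (hRlb c) (hwpos c).le
      _ = ∑ c, w c * (∑ i, (ρ i * Real.negMulLog (∑ j, cycleMeasure (cyc c).2 (i, j))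
            - ρ i * Real.log (ρ i) * (∑ j, cycleMeasure (cyc c).2 (i, j)))) := by
          exact Finset.sum_congr rfl fun c _ => by rw [hphi c]
      _ ≤ ∑ i, (ρ i * Real.negMulLog (∑ c, w c * (∑ j, cycleMeasure (cyc c).2 (i, j)))
            - ρ i * Real.log (ρ i) * (∑ c, w c * (∑ j, cycleMeasure (cyc c).2 (i, j)))) := hjen
      _ = ∑ i, (ρ i * Real.negMulLog (∑ j, ν (i, j))
            - ρ i * Real.log (ρ i) * (∑ j, ν (i, j))) := hΦeq.symm
      _ ≤ _ := hval
  apply le_antisymm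
  · exact csInf_le_csInf ⟨sInf Scyc, hmain⟩ hne hsub
  · obtain ⟨v₀, hv₀⟩ := hne
    exact le_csInf ⟨v₀, hsub hv₀⟩ hmain
end
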